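/- arXiv:2212.09164 — 4 statements merged into one kernel-verified Lean document; each statement's English description precedes it below -/
import Mathlib

section
/- For all real numbers a, b and every real p ≥ 1, |a|^p + |b|^p ≤ |a + b|^p + |a − b|^p. -/
open Real

lemma key_rpow (u v : ℝ) (hu : 0 ≤ u) (hv : 0 ≤ v) {p : ℝ} (hp : 1 ≤ p) :
    (u + v) ^ p ≤ 2 ^ (p - 1) * (u ^ p + v ^ p) := by
  have h := NNReal.rpow_add_le_mul_rpow_add_rpow u.toNNReal v.toNNReal hp
  have := NNReal.coe_le_coe.2 h
  push_cast [NNReal.coe_rpow] at this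
  rwa [Real.coe_toNNReal _ hu, Real.coe_toNNReal _ hv] at this

lemma half_lem (a b : ℝ) {p : ℝ} (hp : 1 ≤ p) :
    2 * |a| ^ p ≤ |a + b| ^ p + |a - b| ^ p := by
  have habs : 2 * |a| ≤ |a + b| + |a - b| := by
    have h1 : 2 * |a| = |(a + b) + (a - b)| := by
      rw [show (a+b)+(a-b) = 2*a by ring, abs_mul]
      simp [abs_of_nonneg]
    rw [h1]; exact abs_add_le _ _
  have hple : (2 * |a|) ^ p ≤ (|a + b| + |a - b|) ^ p :=
    Real.rpow_le_rpow (by positivity) habs (by linarith)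
  have h2 := key_rpow |a + b| |a - b| (abs_nonneg _) (abs_nonneg _) hp
  have hmul : (2 * |a|) ^ p = 2 ^ p * |a| ^ p :=
    Real.mul_rpow (by norm_num) (abs_nonneg _)
  have h2p : (2:ℝ) ^ p = 2 ^ (p - 1) * 2 := by
    rw [show p = (p - 1) + 1 by ring, Real.rpow_add (by norm_num), Real.rpow_one]
    ring_nf
  have hpos : (0:ℝ) < 2 ^ (p - 1) := by positivity
  nlinarith [Real.rpow_nonneg (abs_nonneg (a+b)) p, Real.rpow_nonneg (abs_nonneg (a-b)) p]

/-- For all reals `a b` and every real `p ≥ 1`, `|a|^p + |b|^p ≤ |a+b|^p + |a−b|^p`. -/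
theorem stmt_2 (a b p : ℝ) (hp : 1 ≤ p) :
    |a| ^ p + |b| ^ p ≤ |a + b| ^ p + |a - b| ^ p := by
  have h1 := half_lem a b hp
  have h2 := half_lem b a hp
  rw [show b + a = a + b by ring, abs_sub_comm b a] at h2
  linarith
end

section
/- Let p ≥ 1, n ≥ 2 an integer, and u ∈ L^p(0,1). For 0 ≤ k ≤ n−1 set a_k = n∫_{k/n}^{(k+1)/n} u(s) ds. Then for all 0 ≤ i < j ≤ n−1, |a_j − a_i|^p ≤ n^{p+1} ∫₀^{2/n} ∫₀^1 |u(x+s) − u(x)|^p dx ds, where u is extended by an element of L^p(0, 1 + 2/n). -/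
open MeasureTheory

open Set
open scoped ENNReal NNReal


lemma tele (a : ℕ → ℝ) (i j : ℕ) (hij : i ≤ j) :
    ∑ k ∈ Finset.Ico i j, (a (k+1) - a k) = a j - a i := by
  induction j with
  | zero => interval_cases i; simp
  | succ m ih =>
    rcases Nat.lt_or_ge i (m+1) with h | h
    · have hi : i ≤ m := Nat.lt_succ_iff.mp h
      rw [Finset.sum_Ico_succ_top hi, ih hi]; ring
    · have : i = m + 1 := le_antisymm hij h
      subst this; simp

lemma powmean (p : ℝ) (hp : 1 ≤ p) (s : Finset ℕ) (b : ℕ → ℝ) :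
    |∑ k ∈ s, b k| ^ p ≤ (s.card : ℝ) ^ (p - 1) * ∑ k ∈ s, |b k| ^ p := by
  rcases Finset.eq_empty_or_nonempty s with rfl | hs
  · simp [Real.zero_rpow (by positivity : p ≠ 0)]
  have hm : (0:ℝ) < s.card := by exact_mod_cast Finset.card_pos.mpr hs
  have h1 : |∑ k ∈ s, b k| ≤ ∑ k ∈ s, |b k| := Finset.abs_sum_le_sum_abs _ _
  have h2 : |∑ k ∈ s, b k| ^ p ≤ (∑ k ∈ s, |b k|) ^ p :=
    Real.rpow_le_rpow (abs_nonneg _) h1 (by positivity)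
  refine h2.trans ?_
  have key := Real.rpow_arith_mean_le_arith_mean_rpow s (fun _ => (s.card:ℝ)⁻¹)
    (fun k => (s.card:ℝ) * |b k|) (fun _ _ => by positivity)
    (by rw [Finset.sum_const, nsmul_eq_mul]; exact mul_inv_cancel₀ hm.ne') (fun k _ => by positivity) hp
  have e1 : ∑ k ∈ s, (s.card:ℝ)⁻¹ * ((s.card:ℝ) * |b k|) = ∑ k ∈ s, |b k| := by
    refine Finset.sum_congr rfl fun k _ => ?_; field_simp
  rw [e1] at key
  refine key.trans_eq ?_
  rw [Finset.mul_sum]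
  refine Finset.sum_congr rfl fun k _ => ?_
  rw [Real.mul_rpow hm.le (abs_nonneg _)]
  rw [show p - 1 = p + (-1) by ring, Real.rpow_add hm, Real.rpow_neg_one]
  ring

lemma abs_sub_rpow_le (p A B : ℝ) (hp : 1 ≤ p) :
    |A - B| ^ p ≤ 2 ^ p * (|A| ^ p + |B| ^ p) := by
  have h0 : (0:ℝ) ≤ p := by linarith
  have h1 : |A - B| ≤ 2 * max |A| |B| := by
    calc |A - B| ≤ |A| + |B| := abs_sub _ _
    _ ≤ 2 * max |A| |B| := by rcases le_total |A| |B| with h | h <;> simp [max_eq_right, max_eq_left, h] <;> linarith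
  calc |A - B| ^ p ≤ (2 * max |A| |B|) ^ p := Real.rpow_le_rpow (abs_nonneg _) h1 h0
  _ = 2 ^ p * (max |A| |B|) ^ p := Real.mul_rpow (by norm_num) (le_max_iff.mpr (Or.inl (abs_nonneg _)))
  _ ≤ 2 ^ p * (|A| ^ p + |B| ^ p) := by
      gcongr
      rcases le_total |A| |B| with h | h
      · rw [max_eq_right h]; nlinarith [Real.rpow_nonneg (abs_nonneg A) p]
      · rw [max_eq_left h]; nlinarith [Real.rpow_nonneg (abs_nonneg B) p]

lemma jensenIoc (p : ℝ) (hp : 1 ≤ p) {α β : ℝ} (hab : α < β) {f : ℝ → ℝ}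
    (hf : IntegrableOn f (Ioc α β)) (hf2 : IntegrableOn (fun x => |f x| ^ p) (Ioc α β)) :
    |(β - α)⁻¹ * ∫ x in Ioc α β, f x| ^ p ≤ (β - α)⁻¹ * ∫ x in Ioc α β, |f x| ^ p := by
  set μ := volume.restrict (Ioc α β) with hμ
  have hβα : (0:ℝ) < β - α := by linarith
  haveI : IsFiniteMeasure μ := by
    constructor; rw [hμ, Measure.restrict_apply_univ, Real.volume_Ioc]; exact ENNReal.ofReal_lt_top
  haveI : NeZero μ := by
    constructor
    rw [hμ]
    intro h
    have := congrArg (fun m => m univ) h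
    simp [Measure.restrict_apply_univ, Real.volume_Ioc] at this
    linarith
  have huniv : (μ univ).toReal = β - α := by
    rw [hμ, Measure.restrict_apply_univ, Real.volume_Ioc, ENNReal.toReal_ofReal hβα.le]
  have habs : IntegrableOn (fun x => |f x|) (Ioc α β) := hf.abs
  have hjensen := ConvexOn.map_average_le (μ := μ) (f := fun x => |f x|)
    (convexOn_rpow hp)
    (fun x hx => (Real.continuousAt_rpow_const x p (Or.inr (by linarith))).continuousWithinAt)
    isClosed_Ici (by filter_upwards with x using mem_Ici.mpr (abs_nonneg _)) habs hf2
  rw [average_eq, average_eq, measureReal_def, huniv, smul_eq_mul, smul_eq_mul] at hjensen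
  have h1 : |(β - α)⁻¹ * ∫ x in Ioc α β, f x| ≤ (β - α)⁻¹ * ∫ x in Ioc α β, |f x| := by
    rw [abs_mul, abs_of_nonneg (by positivity : (0:ℝ) ≤ (β - α)⁻¹)]
    gcongr
    simpa [Real.norm_eq_abs] using norm_integral_le_integral_norm (μ := μ) f
  calc |(β - α)⁻¹ * ∫ x in Ioc α β, f x| ^ p
      ≤ ((β - α)⁻¹ * ∫ x in Ioc α β, |f x|) ^ p := by
        apply Real.rpow_le_rpow (abs_nonneg _) h1 (by linarith)
  _ ≤ (β - α)⁻¹ * ∫ x in Ioc α β, |f x| ^ p := hjensen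

lemma lshift (x c d : ℝ) (g : ℝ → ℝ≥0∞) (hg : Measurable g) :
    ∫⁻ s in Ioc c d, g (x + s) = ∫⁻ y in Ioc (x + c) (x + d), g y := by
  have := (measurePreserving_add_left volume x).setLIntegral_comp_preimage_emb
    (measurableEmbedding_addLeft x) g (Ioc (x + c) (x + d))
  rw [preimage_const_add_Ioc] at this
  simpa [add_sub_cancel_left] using this

lemma stepA (p : ℝ) (hp : 1 ≤ p) (v : ℝ → ℝ) (hm : Measurable v) {α₀ α₁ α₂ : ℝ}
    (h01 : α₀ < α₁) (h12 : α₁ < α₂) (hlen : α₂ - α₁ = α₁ - α₀)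
    (hv0 : IntegrableOn v (Ioc α₀ α₁)) (hv1 : IntegrableOn v (Ioc α₁ α₂))
    (hvp0 : IntegrableOn (fun y => |v y| ^ p) (Ioc α₀ α₁))
    (hvp1 : IntegrableOn (fun y => |v y| ^ p) (Ioc α₁ α₂))
    (hfinK : (∫⁻ x in Ioc α₀ α₁, ∫⁻ s in Ioc 0 (α₂ - α₀),
        ENNReal.ofReal (|v (x+s) - v x| ^ p)) ≠ ∞) :
    |((α₁ - α₀)⁻¹ * ∫ y in Ioc α₁ α₂, v y) - (α₁ - α₀)⁻¹ * ∫ y in Ioc α₀ α₁, v y| ^ p ≤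
    ((α₁ - α₀)⁻¹) ^ (2:ℕ) * (∫⁻ x in Ioc α₀ α₁, ∫⁻ s in Ioc 0 (α₂ - α₀),
        ENNReal.ofReal (|v (x+s) - v x| ^ p)).toReal := by
  have hp0 : (0:ℝ) < p := by linarith
  have hd0 : (0:ℝ) < α₁ - α₀ := by linarith
  have hd1 : (0:ℝ) < α₂ - α₁ := by linarith
  set m : ℝ := (α₁ - α₀)⁻¹ with hmdef
  have hm0 : 0 < m := by positivity
  have hminv : m * (α₁ - α₀) = 1 := inv_mul_cancel₀ hd0.ne'
  set C : ℝ := m * ∫ y in Ioc α₁ α₂, v y with hCdef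
  -- inner identity
  have hinner : ∀ x : ℝ, (α₂ - α₁)⁻¹ * ∫ y in Ioc α₁ α₂, (v y - v x) = C - v x := by
    intro x
    rw [integral_sub hv1 (integrableOn_const measure_Ioc_lt_top.ne),
      setIntegral_const, smul_eq_mul, measureReal_def, Real.volume_Ioc, ENNReal.toReal_ofReal hd1.le]
    rw [hCdef, hlen, ← hmdef, mul_sub, ← mul_assoc, hminv, one_mul]
  -- outer identity
  have houter : m * ∫ x in Ioc α₀ α₁, (C - v x) =
      (m * ∫ y in Ioc α₁ α₂, v y) - m * ∫ y in Ioc α₀ α₁, v y := by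
    rw [integral_sub (integrableOn_const (C := C) measure_Ioc_lt_top.ne) hv0,
      setIntegral_const, smul_eq_mul, measureReal_def, Real.volume_Ioc, ENNReal.toReal_ofReal hd0.le]
    rw [hCdef, mul_sub, ← mul_assoc]
    rw [show m * (α₁ - α₀) * (m * ∫ y in Ioc α₁ α₂, v y) = (m * (α₁ - α₀)) * (m * ∫ y in Ioc α₁ α₂, v y) from rfl]
    rw [hminv, one_mul]
  -- integrability of |C - v x| ^ p
  have hW : IntegrableOn (fun x => |C - v x| ^ p) (Ioc α₀ α₁) := by
    apply Integrable.mono' (((integrable_const (|C| ^ p)).add hvp0).const_mul (2 ^ p))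
    · exact ((measurable_const.sub hm).abs.pow_const p).aestronglyMeasurable
    · refine ae_of_all _ fun x => ?_
      rw [Real.norm_eq_abs, abs_of_nonneg (Real.rpow_nonneg (abs_nonneg _) p)]
      exact abs_sub_rpow_le p C (v x) hp
  -- outer Jensen
  have step1 : |(m * ∫ y in Ioc α₁ α₂, v y) - m * ∫ y in Ioc α₀ α₁, v y| ^ p ≤
      m * ∫ x in Ioc α₀ α₁, |C - v x| ^ p := by
    have hJ := jensenIoc p hp h01 (f := fun x => C - v x)
      ((integrableOn_const measure_Ioc_lt_top.ne).sub hv0) hW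
    rw [← hmdef] at hJ
    rw [← houter]
    exact hJ
  -- pointwise inner Jensen, in ENNReal
  have hpt : ∀ x ∈ Ioc α₀ α₁, ENNReal.ofReal (|C - v x| ^ p) ≤
      ENNReal.ofReal m * ∫⁻ s in Ioc 0 (α₂ - α₀), ENNReal.ofReal (|v (x+s) - v x| ^ p) := by
    intro x hx
    have hWx : IntegrableOn (fun y => |v y - v x| ^ p) (Ioc α₁ α₂) := by
      apply Integrable.mono' ((hvp1.add (integrable_const (|v x| ^ p))).const_mul (2 ^ p))
      · exact ((hm.sub measurable_const).abs.pow_const p).aestronglyMeasurable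
      · refine ae_of_all _ fun y => ?_
        rw [Real.norm_eq_abs, abs_of_nonneg (Real.rpow_nonneg (abs_nonneg _) p)]
        exact abs_sub_rpow_le p (v y) (v x) hp
    have hJ := jensenIoc p hp h12 (f := fun y => v y - v x)
      (hv1.sub (integrableOn_const measure_Ioc_lt_top.ne)) hWx
    rw [hinner x] at hJ
    have hmeq : (α₂ - α₁)⁻¹ = m := by rw [hlen, hmdef]
    rw [hmeq] at hJ
    rw [integral_eq_lintegral_of_nonneg_ae (f := fun y => |v y - v x| ^ p)
      (ae_of_all _ fun y => Real.rpow_nonneg (abs_nonneg _) p)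
      ((hm.sub measurable_const).abs.pow_const p).aestronglyMeasurable] at hJ
    set L : ℝ≥0∞ := ∫⁻ y in Ioc α₁ α₂, ENNReal.ofReal (|v y - v x| ^ p) with hLdef
    calc ENNReal.ofReal (|C - v x| ^ p) ≤ ENNReal.ofReal (m * L.toReal) :=
          ENNReal.ofReal_le_ofReal hJ
    _ = ENNReal.ofReal m * ENNReal.ofReal L.toReal := ENNReal.ofReal_mul hm0.le
    _ ≤ ENNReal.ofReal m * L := by gcongr; exact ENNReal.ofReal_toReal_le
    _ ≤ _ := by
        gcongr
        have hsh := lshift x (α₁ - x) (α₂ - x)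
          (fun y => ENNReal.ofReal (|v y - v x| ^ p))
          ((hm.sub measurable_const).abs.pow_const p).ennreal_ofReal
        simp only [add_sub_cancel] at hsh
        rw [hLdef, ← hsh]
        exact lintegral_mono_set (Ioc_subset_Ioc (by linarith [hx.2]) (by linarith [hx.1]))
  -- combine
  set L2 : ℝ≥0∞ := ∫⁻ x in Ioc α₀ α₁, ∫⁻ s in Ioc 0 (α₂ - α₀),
      ENNReal.ofReal (|v (x+s) - v x| ^ p) with hL2def
  have step2 : ∫ x in Ioc α₀ α₁, |C - v x| ^ p ≤ m * L2.toReal := by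
    rw [integral_eq_lintegral_of_nonneg_ae (f := fun x => |C - v x| ^ p)
      (ae_of_all _ fun x => Real.rpow_nonneg (abs_nonneg _) p)
      ((measurable_const.sub hm).abs.pow_const p).aestronglyMeasurable]
    have h1 : ∫⁻ x in Ioc α₀ α₁, ENNReal.ofReal (|C - v x| ^ p) ≤ ENNReal.ofReal m * L2 := by
      rw [hL2def, ← lintegral_const_mul' _ _ ENNReal.ofReal_ne_top]
      exact setLIntegral_mono' measurableSet_Ioc hpt
    have h2 := ENNReal.toReal_mono (ENNReal.mul_ne_top ENNReal.ofReal_ne_top hfinK) h1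
    rw [ENNReal.toReal_mul, ENNReal.toReal_ofReal hm0.le] at h2
    exact h2
  calc |(m * ∫ y in Ioc α₁ α₂, v y) - m * ∫ y in Ioc α₀ α₁, v y| ^ p
      ≤ m * ∫ x in Ioc α₀ α₁, |C - v x| ^ p := step1
  _ ≤ m * (m * L2.toReal) := by gcongr
  _ = m ^ (2:ℕ) * L2.toReal := by ring

lemma key (p : ℝ) (hp : 1 ≤ p) (n : ℕ) (hn : 2 ≤ n) (v : ℝ → ℝ) (hm : Measurable v)
    (hv : MemLp v (ENNReal.ofReal p) (volume.restrict (Set.Ioo 0 (1 + 2 / (n : ℝ)))))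
    (i j : ℕ) (hij : i < j) (hj : j < n) :
    |((n:ℝ) * ∫ x in Ioc ((j:ℝ)/n) (((j:ℝ)+1)/n), v x) -
      ((n:ℝ) * ∫ x in Ioc ((i:ℝ)/n) (((i:ℝ)+1)/n), v x)| ^ p ≤
    (n:ℝ)^(p+1) * ∫ s in Ioc (0:ℝ) (2/(n:ℝ)), ∫ x in Ioc (0:ℝ) 1, |v (x+s) - v x|^p := by
  have hn0 : (0:ℝ) < n := by positivity
  have h2n : (0:ℝ) < 2/(n:ℝ) := by positivity
  have hp0 : (0:ℝ) < p := by linarith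
  set D : Set ℝ := Ioo 0 (1 + 2/(n:ℝ)) with hD
  have hD1 : (1:ℝ) < 1 + 2/(n:ℝ) := by linarith
  haveI : Fact (volume D < ⊤) := ⟨measure_Ioo_lt_top⟩
  have h1le : (1:ℝ≥0∞) ≤ ENNReal.ofReal p := by
    rw [← ENNReal.ofReal_one]; exact ENNReal.ofReal_le_ofReal hp
  have hint : IntegrableOn v D := memLp_one_iff_integrable.mp (hv.mono_exponent h1le)
  have hintp : IntegrableOn (fun x => |v x| ^ p) D := by
    have := hv.integrable_norm_rpow
      (by simp only [ne_eq, ENNReal.ofReal_eq_zero, not_le]; exact hp0) (by simp)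
    simpa [IntegrableOn, ENNReal.toReal_ofReal hp0.le, Real.norm_eq_abs] using this
  have hIocD : volume.restrict (Ioc (0:ℝ) (1 + 2/(n:ℝ))) = volume.restrict D :=
    (Measure.restrict_congr_set Ioo_ae_eq_Ioc).symm
  have hintp' : IntegrableOn (fun x => |v x| ^ p) (Ioc (0:ℝ) (1 + 2/(n:ℝ))) := by
    rw [IntegrableOn, hIocD]; exact hintp
  set M : ℝ≥0∞ := ∫⁻ y in Ioc (0:ℝ) (1 + 2/(n:ℝ)), ENNReal.ofReal (|v y| ^ p) with hMdef
  have hM : M ≠ ∞ := hintp'.lintegral_lt_top.ne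
  set q : ℝ → ℝ → ℝ≥0∞ := fun x s => ENNReal.ofReal (|v (x+s) - v x| ^ p) with hqdef
  have hq_meas : Measurable (fun z : ℝ × ℝ => q z.1 z.2) := by
    apply Measurable.ennreal_ofReal
    exact (((hm.comp (measurable_fst.add measurable_snd)).sub
      (hm.comp measurable_fst)).abs.pow_const p)
  set F : ℝ → ℝ≥0∞ := fun x => ∫⁻ s in Ioc (0:ℝ) (2/(n:ℝ)), q x s with hFdef
  have hF_meas : Measurable F := hq_meas.lintegral_prod_right'
  have h01D : Ioc (0:ℝ) 1 ⊆ D := fun y hy => ⟨hy.1, lt_of_le_of_lt hy.2 hD1⟩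
  -- bound for F on Ioc 0 1
  have hFbound : ∀ x ∈ Ioc (0:ℝ) 1,
      F x ≤ ENNReal.ofReal (2^p) * (M + ENNReal.ofReal (|v x| ^ p) * ENNReal.ofReal (2/(n:ℝ))) := by
    intro x hx
    have step1 : F x ≤ ∫⁻ s in Ioc (0:ℝ) (2/(n:ℝ)),
        ENNReal.ofReal (2^p) * (ENNReal.ofReal (|v (x+s)| ^ p) + ENNReal.ofReal (|v x| ^ p)) := by
      apply setLIntegral_mono' measurableSet_Ioc
      intro s _
      rw [← ENNReal.ofReal_add (by positivity) (by positivity),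
        ← ENNReal.ofReal_mul (by positivity)]
      exact ENNReal.ofReal_le_ofReal (abs_sub_rpow_le p (v (x+s)) (v x) hp)
    refine step1.trans ?_
    rw [lintegral_const_mul' _ _ ENNReal.ofReal_ne_top]
    apply mul_le_mul_right
    have hmeas1 : Measurable (fun s : ℝ => ENNReal.ofReal (|v (x + s)| ^ p)) :=
      ((hm.comp (measurable_const.add measurable_id)).abs.pow_const p).ennreal_ofReal
    rw [lintegral_add_left hmeas1]
    apply add_le_add
    · have hsh := lshift x 0 (2/(n:ℝ)) (fun y => ENNReal.ofReal (|v y| ^ p))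
        ((hm.abs.pow_const p).ennreal_ofReal)
      simp only [add_zero] at hsh
      rw [hsh]
      exact lintegral_mono_set (Ioc_subset_Ioc hx.1.le (by linarith [hx.2]))
    · rw [setLIntegral_const, Real.volume_Ioc, sub_zero]
  have hfin : ∫⁻ x in Ioc (0:ℝ) 1, F x ≠ ∞ := by
    have hb := setLIntegral_mono' (μ := volume) (f := F) measurableSet_Ioc hFbound
    refine ne_top_of_le_ne_top ?_ hb
    rw [lintegral_const_mul' _ _ ENNReal.ofReal_ne_top,
        lintegral_add_left measurable_const,
        setLIntegral_const, lintegral_mul_const' _ _ ENNReal.ofReal_ne_top]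
    have h1 : ∫⁻ x in Ioc (0:ℝ) 1, ENNReal.ofReal (|v x| ^ p) ≤ M :=
      lintegral_mono_set (Ioc_subset_Ioc le_rfl (by linarith))
    refine ENNReal.mul_ne_top ENNReal.ofReal_ne_top (ENNReal.add_ne_top.mpr ⟨?_, ?_⟩)
    · exact ENNReal.mul_ne_top hM measure_Ioc_lt_top.ne
    · exact ENNReal.mul_ne_top (ne_top_of_le_ne_top hM h1) ENNReal.ofReal_ne_top
  -- step A
  set A : ℕ → ℝ := fun k => (n:ℝ) * ∫ x in Ioc ((k:ℝ)/n) (((k:ℝ)+1)/n), v x with hAdef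
  have hIk01 : ∀ k : ℕ, k < n → Ioc ((k:ℝ)/n) (((k:ℝ)+1)/n) ⊆ Ioc (0:ℝ) 1 := by
    intro k hk
    apply Ioc_subset_Ioc (by positivity)
    rw [div_le_one hn0]
    have : (k:ℝ) + 1 ≤ n := by exact_mod_cast hk
    linarith
  have hA : ∀ k : ℕ, k + 1 < n → |A (k+1) - A k| ^ p ≤
      (n:ℝ)^(2:ℕ) * (∫⁻ x in Ioc ((k:ℝ)/n) (((k:ℝ)+1)/n), F x).toReal := by
    intro k hk
    have hkn : ((k:ℝ) + 2) ≤ n := by exact_mod_cast hk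
    have h01 : (k:ℝ)/n < ((k:ℝ)+1)/n := by
      rw [div_lt_div_iff₀ hn0 hn0]; nlinarith
    have h12 : ((k:ℝ)+1)/n < ((k:ℝ)+2)/n := by
      rw [div_lt_div_iff₀ hn0 hn0]; nlinarith
    have hlen : ((k:ℝ)+2)/n - ((k:ℝ)+1)/n = ((k:ℝ)+1)/n - (k:ℝ)/n := by field_simp; ring
    have hinv : (((k:ℝ)+1)/n - (k:ℝ)/n)⁻¹ = (n:ℝ) := by
      rw [show ((k:ℝ)+1)/n - (k:ℝ)/n = 1/n by field_simp; ring, one_div, inv_inv]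
    have hdiff : ((k:ℝ)+2)/n - (k:ℝ)/n = 2/(n:ℝ) := by field_simp; ring
    have hsub0 : Ioc ((k:ℝ)/n) (((k:ℝ)+1)/n) ⊆ Ioc (0:ℝ) 1 := hIk01 k (by omega)
    have hsub1 : Ioc (((k:ℝ)+1)/n) (((k:ℝ)+2)/n) ⊆ Ioc (0:ℝ) 1 := by
      apply Ioc_subset_Ioc (by positivity)
      rw [div_le_one hn0]; linarith
    have hfinK : (∫⁻ x in Ioc ((k:ℝ)/n) (((k:ℝ)+1)/n), ∫⁻ s in
        Ioc 0 (((k:ℝ)+2)/n - (k:ℝ)/n), ENNReal.ofReal (|v (x+s) - v x| ^ p)) ≠ ∞ := by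
      rw [hdiff]
      exact ne_top_of_le_ne_top hfin (lintegral_mono_set hsub0)
    have hs := stepA p hp v hm h01 h12 hlen
      (hint.mono_set (hsub0.trans h01D)) (hint.mono_set (hsub1.trans h01D))
      (hintp.mono_set (hsub0.trans h01D)) (hintp.mono_set (hsub1.trans h01D)) hfinK
    rw [hinv, hdiff] at hs
    have hcast : A (k+1) = (n:ℝ) * ∫ y in Ioc (((k:ℝ)+1)/n) (((k:ℝ)+2)/n), v y := by
      rw [hAdef]
      push_cast
      rw [show ((k:ℝ)+1+1) = (k:ℝ)+2 by ring]
    rw [hcast]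
    exact hs
  -- final chain
  have hjn : (j:ℝ) ≤ n := by exact_mod_cast hj.le
  have htele : A j - A i = ∑ k ∈ Finset.Ico i j, (A (k+1) - A k) := (tele A i j hij.le).symm
  have hpm := powmean p hp (Finset.Ico i j) (fun k => A (k+1) - A k)
  rw [← htele] at hpm
  have hcard : ((Finset.Ico i j).card : ℝ) ≤ (n:ℝ) := by
    rw [Nat.card_Ico]
    have : (j - i : ℕ) ≤ n := by omega
    exact_mod_cast this
  set T : ℝ≥0∞ := ∫⁻ s in Ioc (0:ℝ) (2/(n:ℝ)), ∫⁻ x in Ioc (0:ℝ) 1, q x s with hTdef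
  have hswap : ∫⁻ x in Ioc (0:ℝ) 1, F x = T := by
    rw [hTdef, hFdef]
    exact lintegral_lintegral_swap hq_meas.aemeasurable
  have hTfin : T ≠ ∞ := by rw [← hswap]; exact hfin
  -- each k-term bounded
  have hterm : ∀ k ∈ Finset.Ico i j, |A (k+1) - A k| ^ p ≤
      (n:ℝ)^(2:ℕ) * (∫⁻ x in Ioc ((k:ℝ)/n) (((k:ℝ)+1)/n), F x).toReal := by
    intro k hk
    rw [Finset.mem_Ico] at hk
    exact hA k (by omega)
  have hLk_ne : ∀ k : ℕ, k < n → (∫⁻ x in Ioc ((k:ℝ)/n) (((k:ℝ)+1)/n), F x) ≠ ∞ := by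
    intro k hk
    exact ne_top_of_le_ne_top hfin (lintegral_mono_set (hIk01 k hk))
  have hsum1 : ∑ k ∈ Finset.Ico i j, |A (k+1) - A k| ^ p ≤
      (n:ℝ)^(2:ℕ) * (∑ k ∈ Finset.Ico i j, (∫⁻ x in Ioc ((k:ℝ)/n) (((k:ℝ)+1)/n), F x)).toReal := by
    rw [ENNReal.toReal_sum (fun k hk => hLk_ne k (by rw [Finset.mem_Ico] at hk; omega)),
      Finset.mul_sum]
    exact Finset.sum_le_sum hterm
  have hunion : ∑ k ∈ Finset.Ico i j, (∫⁻ x in Ioc ((k:ℝ)/n) (((k:ℝ)+1)/n), F x) ≤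
      ∫⁻ x in Ioc (0:ℝ) 1, F x := by
    rw [← lintegral_biUnion_finset ?hd (fun k _ => measurableSet_Ioc) F]
    · apply lintegral_mono_set
      apply Set.iUnion₂_subset
      intro k hk
      rw [Finset.mem_Ico] at hk
      exact hIk01 k (by omega)
    case hd =>
      intro k hk l hl hkl
      simp only [Function.onFun]
      rcases Nat.lt_or_ge k l with h | h
      · apply Ioc_disjoint_Ioc.mpr
        apply le_trans (min_le_left _ _)
        apply le_trans ?_ (le_max_right _ _)
        have : (k:ℝ) + 1 ≤ l := by exact_mod_cast h
        gcongr
      · have h' : l < k := by omega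
        apply Ioc_disjoint_Ioc.mpr
        apply le_trans (min_le_right _ _)
        apply le_trans ?_ (le_max_left _ _)
        have : (l:ℝ) + 1 ≤ k := by exact_mod_cast h'
        gcongr
  -- RHS real integral equals T.toReal
  have hg_meas : Measurable (fun s => ∫⁻ x in Ioc (0:ℝ) 1, q x s) :=
    hq_meas.lintegral_prod_left'
  have hRHS : ∫ s in Ioc (0:ℝ) (2/(n:ℝ)), ∫ x in Ioc (0:ℝ) 1, |v (x+s) - v x|^p
      = T.toReal := by
    have h1 : ∀ s : ℝ, ∫ x in Ioc (0:ℝ) 1, |v (x+s) - v x|^p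
        = (∫⁻ x in Ioc (0:ℝ) 1, q x s).toReal := by
      intro s
      have hms : AEStronglyMeasurable (fun x : ℝ => |v (x + s) - v x| ^ p)
          (volume.restrict (Ioc (0:ℝ) 1)) :=
        (((hm.comp (measurable_id.add measurable_const)).sub hm).abs.pow_const
          p).aestronglyMeasurable
      rw [integral_eq_lintegral_of_nonneg_ae
        (ae_of_all _ fun x => Real.rpow_nonneg (abs_nonneg _) p) hms]
    rw [setIntegral_congr_fun measurableSet_Ioc (fun s _ => h1 s)]
    rw [hTdef]
    exact integral_toReal hg_meas.aemeasurable
      (ae_lt_top hg_meas (by rw [← hTdef]; exact hTfin))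
  rw [hRHS]
  -- assemble
  calc |A j - A i| ^ p
      ≤ ((Finset.Ico i j).card : ℝ) ^ (p-1) * ∑ k ∈ Finset.Ico i j, |A (k+1) - A k| ^ p := hpm
  _ ≤ (n:ℝ) ^ (p-1) * ((n:ℝ)^(2:ℕ) * T.toReal) := by
      apply mul_le_mul
      · exact Real.rpow_le_rpow (by positivity) hcard (by linarith)
      · refine hsum1.trans ?_
        exact mul_le_mul_of_nonneg_left
          (ENNReal.toReal_mono hTfin (hunion.trans (le_of_eq hswap))) (by positivity)
      · exact Finset.sum_nonneg fun k _ => Real.rpow_nonneg (abs_nonneg _) p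
      · positivity
  _ = (n:ℝ) ^ (p+1) * T.toReal := by
      rw [← Real.rpow_natCast (n:ℝ) 2, ← mul_assoc, ← Real.rpow_add hn0,
        show p - 1 + (2:ℕ) = p + 1 by push_cast; ring]

/-- For `p ≥ 1`, an integer `n ≥ 2`, and `u ∈ L^p(0, 1 + 2/n)`, with
`a_k = n ∫_{k/n}^{(k+1)/n} u`, for all `0 ≤ i < j ≤ n−1`:
`|a_j − a_i|^p ≤ n^{p+1} ∫₀^{2/n} ∫₀^1 |u(x+s) − u(x)|^p dx ds`. -/
theorem stmt_5 (p : ℝ) (hp : 1 ≤ p) (n : ℕ) (hn : 2 ≤ n) (u : ℝ → ℝ)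
    (hu : MemLp u (ENNReal.ofReal p) (volume.restrict (Set.Ioo 0 (1 + 2 / (n : ℝ)))))
    (a : ℕ → ℝ)
    (ha : ∀ k, a k = (n : ℝ) * ∫ s in ((k : ℝ) / n)..(((k : ℝ) + 1) / n), u s)
    (i j : ℕ) (hij : i < j) (hj : j ≤ n - 1) :
    |a j - a i| ^ p ≤
      (n : ℝ) ^ (p + 1) * ∫ s in (0:ℝ)..(2 / (n : ℝ)), ∫ x in (0:ℝ)..1, |u (x + s) - u x| ^ p := by
  have hn0 : (0:ℝ) < n := by positivity
  have h2n : (0:ℝ) < 2/(n:ℝ) := by positivity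
  set D : Set ℝ := Set.Ioo 0 (1 + 2/(n:ℝ)) with hD
  have hD1 : (1:ℝ) < 1 + 2/(n:ℝ) := by linarith
  have hmeas := hu.aestronglyMeasurable
  set v : ℝ → ℝ := hmeas.mk u with hvdef
  have hvm : Measurable v := hmeas.stronglyMeasurable_mk.measurable
  have huv : u =ᵐ[volume.restrict D] v := hmeas.ae_eq_mk
  have hvp : MemLp v (ENNReal.ofReal p) (volume.restrict D) := MemLp.ae_eq huv hu
  have hjn : j < n := by omega
  have hin : i < n := by omega
  have G : ∀ᵐ y : ℝ, y ∈ D → u y = v y := (ae_restrict_iff' measurableSet_Ioo).mp huv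
  have ha' : ∀ k : ℕ, k < n → a k = (n:ℝ) * ∫ x in Ioc ((k:ℝ)/n) (((k:ℝ)+1)/n), v x := by
    intro k hk
    have hkn : (k:ℝ) + 1 ≤ n := by exact_mod_cast hk
    rw [ha k]
    congr 1
    rw [intervalIntegral.integral_of_le
      (by rw [div_le_div_iff₀ hn0 hn0]; nlinarith : (k:ℝ)/n ≤ ((k:ℝ)+1)/n)]
    apply setIntegral_congr_ae measurableSet_Ioc
    filter_upwards [G] with x hG hx
    apply hG
    constructor
    · exact lt_of_le_of_lt (by positivity) hx.1
    · refine lt_of_le_of_lt (le_trans hx.2 ?_) hD1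
      rw [div_le_one hn0]; linarith
  have hRHS : (∫ s in (0:ℝ)..(2/(n:ℝ)), ∫ x in (0:ℝ)..1, |u (x+s) - u x|^p)
      = ∫ s in Ioc (0:ℝ) (2/(n:ℝ)), ∫ x in Ioc (0:ℝ) 1, |v (x+s) - v x|^p := by
    rw [intervalIntegral.integral_of_le h2n.le]
    apply setIntegral_congr_ae measurableSet_Ioc
    filter_upwards with s hs
    rw [intervalIntegral.integral_of_le (by norm_num : (0:ℝ) ≤ 1)]
    apply setIntegral_congr_ae measurableSet_Ioc
    have hT : MeasurePreserving (fun x : ℝ => x + s) volume volume :=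
      measurePreserving_add_right volume s
    have G2 : ∀ᵐ x : ℝ, x + s ∈ D → u (x+s) = v (x+s) := hT.quasiMeasurePreserving.ae G
    have hne : ∀ᵐ x : ℝ, x ≠ 1 := by
      rw [ae_iff]
      have : {x : ℝ | ¬ x ≠ 1} = {1} := by ext; simp
      rw [this]
      exact measure_singleton 1
    filter_upwards [G, G2, hne] with x h1 h2 h3 hx
    have hxD : x ∈ D := ⟨hx.1, lt_of_le_of_lt hx.2 hD1⟩
    have hx1 : x < 1 := lt_of_le_of_ne hx.2 h3
    have hxsD : x + s ∈ D := ⟨by linarith [hx.1, hs.1], by linarith [hs.2]⟩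
    rw [h1 hxD, h2 hxsD]
  rw [hRHS, ha' j hjn, ha' i hin]
  exact key p hp n hn v hvm hvp i j hij hjn
end

section
/- Let p > 1 and let (ρ, ξ) be a C¹ solution on [0,T] × [0,1] of the system ρ_t − ρ_x = −(1/2) a (ρ − ξ), ξ_t + ξ_x = (1/2) a (ρ − ξ) with boundary conditions ρ(t,0) = ξ(t,0) and ρ(t,1) = ξ(t,1), where a is continuous. Then for all t ∈ [0,T], (1/p)∫₀¹(|ρ(t,x)|^p + |ξ(t,x)|^p) dx + (1/2)∫₀^t ∫₀¹ a (ρ−ξ)(ρ|ρ|^{p−2} − ξ|ξ|^{p−2}) dx ds = (1/p)∫₀¹(|ρ(0,x)|^p + |ξ(0,x)|^p) dx. -/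
open MeasureTheory

lemma aux_cont_G {p : ℝ} (hp : 1 < p) : Continuous (fun x : ℝ => x * |x| ^ (p - 2)) := by
  have hp0 : p ≠ 0 := by positivity
  have h1 : Continuous (deriv (fun x : ℝ => ‖x‖ ^ p)) :=
    (contDiff_norm_rpow (E := ℝ) hp).continuous_deriv le_rfl
  have h2 : deriv (fun x : ℝ => ‖x‖ ^ p) = fun x : ℝ => p * |x| ^ (p - 2) * x := by
    ext x
    have : (fun x : ℝ => ‖x‖ ^ p) = fun x : ℝ => |x| ^ p := by
      funext y; rw [Real.norm_eq_abs]
    rw [this]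
    exact (hasDerivAt_abs_rpow x hp).deriv
  rw [h2] at h1
  have h3 : Continuous (fun x : ℝ => p⁻¹ * (p * |x| ^ (p - 2) * x)) := continuous_const.mul h1
  have h4 : (fun x : ℝ => x * |x| ^ (p - 2)) = fun x : ℝ => p⁻¹ * (p * |x| ^ (p - 2) * x) := by
    funext x; field_simp
  rw [h4]; exact h3

/-- L^p energy identity for the hyperbolic system with Dirichlet-type boundary conditions
`ρ = ξ` at both endpoints. -/
theorem stmt_12 (p T : ℝ) (hp : 1 < p) (hT : 0 < T) (a ρ ξ : ℝ → ℝ → ℝ)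
    (ha : Continuous (fun q : ℝ × ℝ => a q.1 q.2))
    (hρ : ContDiff ℝ 1 (fun q : ℝ × ℝ => ρ q.1 q.2))
    (hξ : ContDiff ℝ 1 (fun q : ℝ × ℝ => ξ q.1 q.2))
    (hpde1 : ∀ t ∈ Set.Icc (0:ℝ) T, ∀ x ∈ Set.Icc (0:ℝ) 1,
      deriv (fun s => ρ s x) t - deriv (fun y => ρ t y) x
        = -(1 / 2) * a t x * (ρ t x - ξ t x))
    (hpde2 : ∀ t ∈ Set.Icc (0:ℝ) T, ∀ x ∈ Set.Icc (0:ℝ) 1,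
      deriv (fun s => ξ s x) t + deriv (fun y => ξ t y) x
        = (1 / 2) * a t x * (ρ t x - ξ t x))
    (hbc : ∀ t ∈ Set.Icc (0:ℝ) T, ρ t 0 = ξ t 0 ∧ ρ t 1 = ξ t 1) :
    ∀ t ∈ Set.Icc (0:ℝ) T,
      (1 / p) * (∫ x in (0:ℝ)..1, (|ρ t x| ^ p + |ξ t x| ^ p))
        + (1 / 2) * ∫ s in (0:ℝ)..t, ∫ x in (0:ℝ)..1,
            a s x * (ρ s x - ξ s x)
              * (ρ s x * |ρ s x| ^ (p - 2) - ξ s x * |ξ s x| ^ (p - 2))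
      = (1 / p) * ∫ x in (0:ℝ)..1, (|ρ 0 x| ^ p + |ξ 0 x| ^ p) := by
  have hp0 : (0:ℝ) < p := by linarith
  have hGc := aux_cont_G hp
  have hρc : Continuous (fun q : ℝ × ℝ => ρ q.1 q.2) := hρ.continuous
  have hξc : Continuous (fun q : ℝ × ℝ => ξ q.1 q.2) := hξ.continuous
  -- partial derivatives
  set rt : ℝ × ℝ → ℝ := fun q => fderiv ℝ (fun q : ℝ × ℝ => ρ q.1 q.2) q (1, 0) with hrt_def
  set rx : ℝ × ℝ → ℝ := fun q => fderiv ℝ (fun q : ℝ × ℝ => ρ q.1 q.2) q (0, 1) with hrx_def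
  set et : ℝ × ℝ → ℝ := fun q => fderiv ℝ (fun q : ℝ × ℝ => ξ q.1 q.2) q (1, 0) with het_def
  set ex : ℝ × ℝ → ℝ := fun q => fderiv ℝ (fun q : ℝ × ℝ => ξ q.1 q.2) q (0, 1) with hex_def
  have hrtc : Continuous rt := (hρ.continuous_fderiv one_ne_zero).clm_apply continuous_const
  have hrxc : Continuous rx := (hρ.continuous_fderiv one_ne_zero).clm_apply continuous_const
  have hetc : Continuous et := (hξ.continuous_fderiv one_ne_zero).clm_apply continuous_const
  have hexc : Continuous ex := (hξ.continuous_fderiv one_ne_zero).clm_apply continuous_const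
  have hrt : ∀ t x : ℝ, HasDerivAt (fun s => ρ s x) (rt (t, x)) t := by
    intro t x
    have hline : HasDerivAt (fun s : ℝ => (s, x)) ((1:ℝ), (0:ℝ)) t :=
      (hasDerivAt_id t).prodMk (hasDerivAt_const t x)
    have := ((hρ.differentiable one_ne_zero (t, x)).hasFDerivAt).comp_hasDerivAt t hline
    simpa [Function.comp_def] using this
  have hrx : ∀ t x : ℝ, HasDerivAt (fun y => ρ t y) (rx (t, x)) x := by
    intro t x
    have hline : HasDerivAt (fun y : ℝ => (t, y)) ((0:ℝ), (1:ℝ)) x :=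
      (hasDerivAt_const x t).prodMk (hasDerivAt_id x)
    have := ((hρ.differentiable one_ne_zero (t, x)).hasFDerivAt).comp_hasDerivAt x hline
    simpa [Function.comp_def] using this
  have het : ∀ t x : ℝ, HasDerivAt (fun s => ξ s x) (et (t, x)) t := by
    intro t x
    have hline : HasDerivAt (fun s : ℝ => (s, x)) ((1:ℝ), (0:ℝ)) t :=
      (hasDerivAt_id t).prodMk (hasDerivAt_const t x)
    have := ((hξ.differentiable one_ne_zero (t, x)).hasFDerivAt).comp_hasDerivAt t hline
    simpa [Function.comp_def] using this
  have hex : ∀ t x : ℝ, HasDerivAt (fun y => ξ t y) (ex (t, x)) x := by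
    intro t x
    have hline : HasDerivAt (fun y : ℝ => (t, y)) ((0:ℝ), (1:ℝ)) x :=
      (hasDerivAt_const x t).prodMk (hasDerivAt_id x)
    have := ((hξ.differentiable one_ne_zero (t, x)).hasFDerivAt).comp_hasDerivAt x hline
    simpa [Function.comp_def] using this
  -- the energy density and its t-derivative
  set Φ : ℝ × ℝ → ℝ := fun q => |ρ q.1 q.2| ^ p + |ξ q.1 q.2| ^ p with hΦ_def
  set Φ' : ℝ × ℝ → ℝ := fun q =>
    p * ((ρ q.1 q.2 * |ρ q.1 q.2| ^ (p - 2)) * rt q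
      + (ξ q.1 q.2 * |ξ q.1 q.2| ^ (p - 2)) * et q) with hΦ'_def
  have hΦc : Continuous Φ := by
    have h1 : Continuous (fun q : ℝ × ℝ => |ρ q.1 q.2| ^ p) := by
      have := (continuous_abs.comp hρc).rpow_const (fun q => Or.inr hp0.le)
      exact this
    have h2 : Continuous (fun q : ℝ × ℝ => |ξ q.1 q.2| ^ p) := by
      have := (continuous_abs.comp hξc).rpow_const (fun q => Or.inr hp0.le)
      exact this
    exact h1.add h2
  have hΦ'c : Continuous Φ' := by
    exact continuous_const.mul (((hGc.comp hρc).mul hrtc).add ((hGc.comp hξc).mul hetc))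
  have hΦ'd : ∀ t x : ℝ, HasDerivAt (fun s => Φ (s, x)) (Φ' (t, x)) t := by
    intro t x
    have h1 : HasDerivAt (fun s => |ρ s x| ^ p)
        ((p * |ρ t x| ^ (p - 2) * ρ t x) * rt (t, x)) t := by
      have := (hasDerivAt_abs_rpow (ρ t x) hp).comp t (hrt t x)
      simpa [Function.comp_def] using this
    have h2 : HasDerivAt (fun s => |ξ s x| ^ p)
        ((p * |ξ t x| ^ (p - 2) * ξ t x) * et (t, x)) t := by
      have := (hasDerivAt_abs_rpow (ξ t x) hp).comp t (het t x)
      simpa [Function.comp_def] using this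
    have h3 := h1.add h2
    have heq : Φ' (t, x) = (p * |ρ t x| ^ (p - 2) * ρ t x) * rt (t, x)
        + (p * |ξ t x| ^ (p - 2) * ξ t x) * et (t, x) := by
      simp only [hΦ'_def]; ring
    rw [heq]
    exact h3
  -- derivative of the inner energy integral
  have hI : ∀ t₀ : ℝ, HasDerivAt (fun t => ∫ x in (0:ℝ)..1, Φ (t, x))
      (∫ x in (0:ℝ)..1, Φ' (t₀, x)) t₀ := by
    intro t₀
    have hcpt : IsCompact (Set.Icc (t₀ - 1) (t₀ + 1) ×ˢ Set.Icc (0:ℝ) 1) :=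
      isCompact_Icc.prod isCompact_Icc
    obtain ⟨M, hM⟩ := hcpt.exists_bound_of_continuousOn hΦ'c.continuousOn
    have key := intervalIntegral.hasDerivAt_integral_of_dominated_loc_of_deriv_le
      (F := fun t x => Φ (t, x)) (F' := fun t x => Φ' (t, x)) (bound := fun _ => M)
      (a := 0) (b := 1) (μ := volume) (x₀ := t₀) (s := Metric.ball t₀ 1) (Metric.ball_mem_nhds t₀ one_pos)
      (Filter.Eventually.of_forall fun t =>
        ((hΦc.comp (continuous_const.prodMk continuous_id)).aestronglyMeasurable :
          AEStronglyMeasurable (fun x => Φ (t, x)) _))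
      ((hΦc.comp (continuous_const.prodMk continuous_id)).intervalIntegrable 0 1)
      ((hΦ'c.comp (continuous_const.prodMk continuous_id)).aestronglyMeasurable)
      (Filter.Eventually.of_forall ?_)
      (intervalIntegrable_const)
      (Filter.Eventually.of_forall fun x _ t _ => hΦ'd t x)
    · exact key.2
    · intro x hx t htb
      apply hM
      constructor
      · have : |t - t₀| < 1 := by
          simpa [Real.dist_eq] using Metric.mem_ball.mp htb
        constructor <;> [linarith [abs_lt.mp this |>.1]; linarith [abs_lt.mp this |>.2]]
      · rw [Set.uIoc_of_le (by norm_num : (0:ℝ) ≤ 1)] at hx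
        exact ⟨hx.1.le, hx.2⟩
  -- continuity of the source term integral
  set A : ℝ → ℝ → ℝ := fun s x => a s x * (ρ s x - ξ s x)
      * (ρ s x * |ρ s x| ^ (p - 2) - ξ s x * |ξ s x| ^ (p - 2)) with hA_def
  have hAc : Continuous (Function.uncurry A) := by
    have h1 : Continuous (fun q : ℝ × ℝ => ρ q.1 q.2 * |ρ q.1 q.2| ^ (p - 2)) := hGc.comp hρc
    have h2 : Continuous (fun q : ℝ × ℝ => ξ q.1 q.2 * |ξ q.1 q.2| ^ (p - 2)) := hGc.comp hξc
    exact (ha.mul (hρc.sub hξc)).mul (h1.sub h2)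
  set g : ℝ → ℝ := fun s => ∫ x in (0:ℝ)..1, A s x with hg_def
  have hgc : Continuous g :=
    intervalIntegral.continuous_parametric_intervalIntegral_of_continuous' hAc 0 1
  have hJ : ∀ t : ℝ, HasDerivAt (fun u => ∫ s in (0:ℝ)..u, g s) (g t) t := by
    intro t
    exact intervalIntegral.integral_hasDerivAt_right (hgc.intervalIntegrable _ _)
      ⟨Set.univ, Filter.univ_mem, hgc.aestronglyMeasurable.restrict⟩ hgc.continuousAt
  -- the full energy functional
  set F : ℝ → ℝ := fun t => (1 / p) * (∫ x in (0:ℝ)..1, Φ (t, x))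
      + (1 / 2) * ∫ s in (0:ℝ)..t, g s with hF_def
  have hF' : ∀ t : ℝ, HasDerivAt F
      ((1 / p) * (∫ x in (0:ℝ)..1, Φ' (t, x)) + (1 / 2) * g t) t := by
    intro t
    exact ((hI t).const_mul _).add ((hJ t).const_mul _)
  -- the derivative vanishes on [0, T]
  have hkey : ∀ t ∈ Set.Icc (0:ℝ) T,
      (1 / p) * (∫ x in (0:ℝ)..1, Φ' (t, x)) + (1 / 2) * g t = 0 := by
    intro t ht
    have hA_int : IntervalIntegrable (fun x => A t x) volume 0 1 :=
      (hAc.comp (continuous_const.prodMk continuous_id)).intervalIntegrable 0 1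
    set B : ℝ → ℝ := fun x => (p * |ρ t x| ^ (p - 2) * ρ t x) * rx (t, x)
        - (p * |ξ t x| ^ (p - 2) * ξ t x) * ex (t, x) with hB_def
    have hB : ∀ x : ℝ, HasDerivAt (fun y => |ρ t y| ^ p - |ξ t y| ^ p) (B x) x := by
      intro x
      have h1 : HasDerivAt (fun y => |ρ t y| ^ p)
          ((p * |ρ t x| ^ (p - 2) * ρ t x) * rx (t, x)) x := by
        have := (hasDerivAt_abs_rpow (ρ t x) hp).comp x (hrx t x)
        simpa [Function.comp_def] using this
      have h2 : HasDerivAt (fun y => |ξ t y| ^ p)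
          ((p * |ξ t x| ^ (p - 2) * ξ t x) * ex (t, x)) x := by
        have := (hasDerivAt_abs_rpow (ξ t x) hp).comp x (hex t x)
        simpa [Function.comp_def] using this
      exact h1.sub h2
    have hBc : Continuous B := by
      have hρtc : Continuous (fun x => ρ t x) := hρc.comp (continuous_const.prodMk continuous_id)
      have hξtc : Continuous (fun x => ξ t x) := hξc.comp (continuous_const.prodMk continuous_id)
      have hrxtc : Continuous (fun x => rx (t, x)) :=
        hrxc.comp (continuous_const.prodMk continuous_id)
      have hextc : Continuous (fun x => ex (t, x)) :=
        hexc.comp (continuous_const.prodMk continuous_id)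
      have e1 : Continuous (fun x => (p * |ρ t x| ^ (p - 2) * ρ t x)) := by
        have h : Continuous fun x : ℝ => p * (ρ t x * |ρ t x| ^ (p - 2)) :=
          Continuous.mul continuous_const (hGc.comp hρtc)
        convert h using 1
        funext x; ring
      have e2 : Continuous (fun x => (p * |ξ t x| ^ (p - 2) * ξ t x)) := by
        have h : Continuous fun x : ℝ => p * (ξ t x * |ξ t x| ^ (p - 2)) :=
          Continuous.mul continuous_const (hGc.comp hξtc)
        convert h using 1
        funext x; ring
      exact (e1.mul hrxtc).sub (e2.mul hextc)
    have hB_int : IntervalIntegrable B volume 0 1 := hBc.intervalIntegrable 0 1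
    have hzero : (∫ x in (0:ℝ)..1, B x) = 0 := by
      rw [intervalIntegral.integral_eq_sub_of_hasDerivAt (fun x _ => hB x) hB_int]
      rw [(hbc t ht).1, (hbc t ht).2]
      ring
    have hcongr : Set.EqOn (fun x => Φ' (t, x)) (fun x => B x - (p / 2) * A t x)
        (Set.uIcc 0 1) := by
      intro x hx
      have hx' : x ∈ Set.Icc (0:ℝ) 1 := by
        rwa [Set.uIcc_of_le (by norm_num : (0:ℝ) ≤ 1)] at hx
      have e1 : rt (t, x) = rx (t, x) + (-(1 / 2)) * a t x * (ρ t x - ξ t x) := by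
        have h := hpde1 t ht x hx'
        rw [(hrt t x).deriv, (hrx t x).deriv] at h
        linarith
      have e2 : et (t, x) = -ex (t, x) + (1 / 2) * a t x * (ρ t x - ξ t x) := by
        have h := hpde2 t ht x hx'
        rw [(het t x).deriv, (hex t x).deriv] at h
        linarith
      simp only [hΦ'_def, hA_def, hB_def]
      rw [e1, e2]
      ring
    have hsplit : (∫ x in (0:ℝ)..1, Φ' (t, x))
        = (∫ x in (0:ℝ)..1, B x) - (p / 2) * ∫ x in (0:ℝ)..1, A t x := by
      rw [intervalIntegral.integral_congr hcongr]
      rw [intervalIntegral.integral_sub hB_int (hA_int.const_mul _)]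
      rw [intervalIntegral.integral_const_mul]
    have hgt : g t = ∫ x in (0:ℝ)..1, A t x := rfl
    rw [hsplit, hzero, hgt]
    field_simp
    ring
  have hFd : Differentiable ℝ F := fun t => (hF' t).differentiableAt
  have hconst : ∀ t ∈ Set.Icc (0:ℝ) T, F t = F 0 := by
    intro t ht
    refine constant_of_has_deriv_right_zero hFd.continuous.continuousOn ?_ t ht
    intro s hs
    have h0 := hF' s
    rw [hkey s ⟨hs.1, hs.2.le⟩] at h0
    exact h0.hasDerivWithinAt
  intro t ht
  have := hconst t ht
  have hF0 : F 0 = (1 / p) * ∫ x in (0:ℝ)..1, (|ρ 0 x| ^ p + |ξ 0 x| ^ p) := by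
    simp [hF_def, hΦ_def]
  calc (1 / p) * (∫ x in (0:ℝ)..1, (|ρ t x| ^ p + |ξ t x| ^ p))
        + (1 / 2) * ∫ s in (0:ℝ)..t, ∫ x in (0:ℝ)..1,
            a s x * (ρ s x - ξ s x)
              * (ρ s x * |ρ s x| ^ (p - 2) - ξ s x * |ξ s x| ^ (p - 2))
      = F t := rfl
    _ = F 0 := this
    _ = _ := hF0
end

section
/- Let p > 1, c₀, c₁ ∈ (−1, 1), a : [0,T] × [0,1] → [0,∞) continuous, and let (ρ, ξ) be a C¹ solution of ρ_t − ρ_x = −(1/2) a (ρ − ξ), ξ_t + ξ_x = (1/2) a (ρ − ξ) on [0,T] × [0,1] with boundary conditions ξ(t,0) = c₀ ρ(t,0) and ρ(t,1) = c₁ ξ(t,1). Then for all t ∈ [0,T], (1/p)∫₀¹(|ρ(t,x)|^p + |ξ(t,x)|^p) dx + (1/2)∫₀^t ∫₀¹ a (ρ−ξ)(ρ|ρ|^{p−2} − ξ|ξ|^{p−2}) dx ds + (1/p)∫₀^t [(1 − |c₁|^p)|ξ(s,1)|^p + (1 − |c₀|^p)|ρ(s,0)|^p] ds = (1/p)∫₀¹(|ρ(0,x)|^p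 + |ξ(0,x)|^p) dx; in particular t ↦ ∫₀¹(|ρ(t,x)|^p + |ξ(t,x)|^p) dx is nonincreasing. -/
open MeasureTheory

/-- derivative of |u|^p -/
lemma aux_hasDerivAt_abs_rpow {p : ℝ} (hp : 1 < p) (u : ℝ) :
    HasDerivAt (fun v : ℝ => |v| ^ p) (p * (u * |u| ^ (p - 2))) u := by
  rcases lt_trichotomy u 0 with hu | hu | hu
  · have h1 : HasDerivAt (fun v : ℝ => (-v) ^ p) (p * (-u) ^ (p - 1) * (-1)) u := by
      have := (Real.hasDerivAt_rpow_const (x := -u) (p := p) (Or.inl (by linarith))).comp u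
        (hasDerivAt_neg u)
      exact this
    have h2 : (fun v : ℝ => (-v) ^ p) =ᶠ[nhds u] fun v => |v| ^ p := by
      filter_upwards [Iio_mem_nhds hu] with v hv
      rw [abs_of_neg hv]
    have h3 := h1.congr_of_eventuallyEq h2.symm
    refine h3.congr_deriv ?_
    have h4 : (-u) ^ (p - 1) = (-u) ^ (p - 2) * (-u) ^ (1:ℝ) := by
      rw [← Real.rpow_add (by linarith : (0:ℝ) < -u)]; ring_nf
    rw [abs_of_neg hu, h4, Real.rpow_one]; ring
  · subst hu
    have hval : p * ((0:ℝ) * |(0:ℝ)| ^ (p - 2)) = 0 := by ring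
    rw [hval, hasDerivAt_iff_tendsto_slope]
    apply squeeze_zero_norm (a := fun h : ℝ => |h| ^ (p - 1))
    · intro h
      rcases eq_or_ne h 0 with rfl | hh
      · simp [slope_def_field]
        positivity
      · have habs : (0:ℝ) < |h| := abs_pos.mpr hh
        rw [slope_def_field, Real.norm_eq_abs, abs_zero,
          Real.zero_rpow (by linarith : p ≠ 0), sub_zero, sub_zero, abs_div,
          abs_of_nonneg (Real.rpow_nonneg (abs_nonneg _) _)]
        rw [show p - 1 = p - (1:ℝ) from rfl, Real.rpow_sub habs, Real.rpow_one]
    · have hc : ContinuousAt (fun x : ℝ => x ^ (p - 1)) 0 :=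
        Real.continuousAt_rpow_const 0 (p - 1) (Or.inr (by linarith))
      have habs0 : Filter.Tendsto (fun h : ℝ => |h|) (nhds 0) (nhds 0) := by
        simpa using continuous_abs.tendsto (0:ℝ)
      have := hc.tendsto.comp habs0
      simp only [Function.comp, abs_zero, Real.zero_rpow (by linarith : p - 1 ≠ 0)] at this
      exact this.mono_left nhdsWithin_le_nhds
  · have h1 : HasDerivAt (fun v : ℝ => v ^ p) (p * u ^ (p - 1)) u :=
      Real.hasDerivAt_rpow_const (Or.inl (ne_of_gt hu))
    have h2 : (fun v : ℝ => v ^ p) =ᶠ[nhds u] fun v => |v| ^ p := by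
      filter_upwards [Ioi_mem_nhds hu] with v hv
      rw [abs_of_pos hv]
    have h3 := h1.congr_of_eventuallyEq h2.symm
    refine h3.congr_deriv ?_
    have h4 : u ^ (p - 1) = u ^ (p - 2) * u ^ (1:ℝ) := by
      rw [← Real.rpow_add hu]; ring_nf
    rw [abs_of_pos hu, h4, Real.rpow_one]; ring

lemma aux_phi_cont {p : ℝ} (hp : 1 < p) :
    Continuous (fun u : ℝ => u * |u| ^ (p - 2)) := by
  rw [continuous_iff_continuousAt]
  intro u
  rcases eq_or_ne u 0 with rfl | hu
  · have hval : (0:ℝ) * |(0:ℝ)| ^ (p - 2) = 0 := by ring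
    rw [ContinuousAt, hval]
    apply squeeze_zero_norm (a := fun v : ℝ => |v| ^ (p - 1))
    · intro v
      rcases eq_or_ne v 0 with rfl | hv
      · simpa using Real.rpow_nonneg (abs_nonneg (0:ℝ)) (p-1)
      · have habs : (0:ℝ) < |v| := abs_pos.mpr hv
        rw [Real.norm_eq_abs, abs_mul, abs_of_nonneg (Real.rpow_nonneg (abs_nonneg _) _)]
        have : |v| ^ (p - 1) = |v| ^ (1:ℝ) * |v| ^ (p - 2) := by
          rw [← Real.rpow_add habs]; ring_nf
        rw [this, Real.rpow_one]
    · have hc : ContinuousAt (fun x : ℝ => x ^ (p - 1)) 0 :=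
        Real.continuousAt_rpow_const 0 (p - 1) (Or.inr (by linarith))
      have habs0 : Filter.Tendsto (fun h : ℝ => |h|) (nhds 0) (nhds 0) := by
        simpa using continuous_abs.tendsto (0:ℝ)
      have := hc.tendsto.comp habs0
      simpa [Function.comp_def, Real.zero_rpow (by linarith : p - 1 ≠ 0)] using this
  · exact continuousAt_id.mul
      ((Real.continuousAt_rpow_const |u| (p-2) (Or.inl (abs_ne_zero.mpr hu))).comp
        continuous_abs.continuousAt)

lemma aux_repr_nonneg {p : ℝ} (hp : 1 < p) {w : ℝ} (hw : 0 ≤ w) :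
    w * |w| ^ (p - 2) = w ^ (p - 1) := by
  rcases eq_or_lt_of_le hw with rfl | hw'
  · simp [Real.zero_rpow (by linarith : p - 1 ≠ 0)]
  · rw [abs_of_pos hw']
    have : w ^ (p - 1) = w ^ (1:ℝ) * w ^ (p - 2) := by
      rw [← Real.rpow_add hw']; ring_nf
    rw [this, Real.rpow_one]

lemma aux_repr_nonpos {p : ℝ} (hp : 1 < p) {w : ℝ} (hw : w ≤ 0) :
    w * |w| ^ (p - 2) = -((-w) ^ (p - 1)) := by
  have h := aux_repr_nonneg hp (by linarith : (0:ℝ) ≤ -w)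
  rw [abs_neg] at h
  nlinarith [h]

lemma aux_phi_mono {p : ℝ} (hp : 1 < p) {u v : ℝ} (huv : u ≤ v) :
    u * |u| ^ (p - 2) ≤ v * |v| ^ (p - 2) := by
  rcases le_or_gt 0 u with hu | hu
  · rw [aux_repr_nonneg hp hu, aux_repr_nonneg hp (hu.trans huv)]
    exact Real.rpow_le_rpow hu huv (by linarith)
  · rcases le_or_gt 0 v with hv | hv
    · rw [aux_repr_nonpos hp hu.le, aux_repr_nonneg hp hv]
      have h1 : (0:ℝ) ≤ (-u) ^ (p - 1) := Real.rpow_nonneg (by linarith) _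
      have h2 : (0:ℝ) ≤ v ^ (p - 1) := Real.rpow_nonneg hv _
      linarith
    · rw [aux_repr_nonpos hp hu.le, aux_repr_nonpos hp hv.le]
      have : (-v) ^ (p - 1) ≤ (-u) ^ (p - 1) :=
        Real.rpow_le_rpow (by linarith) (by linarith) (by linarith)
      linarith

lemma aux_pair_nonneg {p : ℝ} (hp : 1 < p) (u v : ℝ) :
    0 ≤ (u - v) * (u * |u| ^ (p - 2) - v * |v| ^ (p - 2)) := by
  rcases le_total u v with h | h
  · nlinarith [aux_phi_mono hp h]
  · nlinarith [aux_phi_mono hp h]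

lemma aux_swap (f : ℝ → ℝ → ℝ) (hf : Continuous fun q : ℝ × ℝ => f q.1 q.2)
    (t : ℝ) (ht : 0 ≤ t) :
    ∫ x in (0:ℝ)..1, (∫ s in (0:ℝ)..t, f s x) = ∫ s in (0:ℝ)..t, ∫ x in (0:ℝ)..1, f s x := by
  rw [intervalIntegral.integral_of_le ht, intervalIntegral.integral_of_le (zero_le_one)]
  simp_rw [intervalIntegral.integral_of_le ht, intervalIntegral.integral_of_le (zero_le_one)]
  apply MeasureTheory.integral_integral_swap
  have hInt : IntegrableOn (Function.uncurry fun x s => f s x)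
      ((Set.Ioc (0:ℝ) 1) ×ˢ (Set.Ioc (0:ℝ) t)) (volume : Measure (ℝ × ℝ)) := by
    apply MeasureTheory.IntegrableOn.mono_set
      (t := (Set.Icc (0:ℝ) 1) ×ˢ (Set.Icc (0:ℝ) t))
    · exact ContinuousOn.integrableOn_compact (isCompact_Icc.prod isCompact_Icc)
        ((hf.comp (continuous_snd.prodMk continuous_fst)).continuousOn)
    · exact Set.prod_mono Set.Ioc_subset_Icc_self Set.Ioc_subset_Icc_self
  rw [Measure.prod_restrict]
  rw [MeasureTheory.Measure.volume_eq_prod] at hInt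
  exact hInt

/-- L^p energy identity, with dissipative boundary terms, for the hyperbolic system with
dynamic boundary conditions `ξ(t,0) = c₀ ρ(t,0)`, `ρ(t,1) = c₁ ξ(t,1)`; in particular
the L^p energy is nonincreasing on `[0,T]`. -/
theorem stmt_15 (p T c₀ c₁ : ℝ) (hp : 1 < p) (hT : 0 < T)
    (hc₀ : c₀ ∈ Set.Ioo (-1 : ℝ) 1) (hc₁ : c₁ ∈ Set.Ioo (-1 : ℝ) 1)
    (a ρ ξ : ℝ → ℝ → ℝ)
    (ha : Continuous (fun q : ℝ × ℝ => a q.1 q.2))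
    (ha0 : ∀ t ∈ Set.Icc (0:ℝ) T, ∀ x ∈ Set.Icc (0:ℝ) 1, 0 ≤ a t x)
    (hρ : ContDiff ℝ 1 (fun q : ℝ × ℝ => ρ q.1 q.2))
    (hξ : ContDiff ℝ 1 (fun q : ℝ × ℝ => ξ q.1 q.2))
    (hpde1 : ∀ t ∈ Set.Icc (0:ℝ) T, ∀ x ∈ Set.Icc (0:ℝ) 1,
      deriv (fun s => ρ s x) t - deriv (fun y => ρ t y) x
        = -(1 / 2) * a t x * (ρ t x - ξ t x))
    (hpde2 : ∀ t ∈ Set.Icc (0:ℝ) T, ∀ x ∈ Set.Icc (0:ℝ) 1,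
      deriv (fun s => ξ s x) t + deriv (fun y => ξ t y) x
        = (1 / 2) * a t x * (ρ t x - ξ t x))
    (hbc : ∀ t ∈ Set.Icc (0:ℝ) T, ξ t 0 = c₀ * ρ t 0 ∧ ρ t 1 = c₁ * ξ t 1) :
    (∀ t ∈ Set.Icc (0:ℝ) T,
      (1 / p) * (∫ x in (0:ℝ)..1, (|ρ t x| ^ p + |ξ t x| ^ p))
        + (1 / 2) * (∫ s in (0:ℝ)..t, ∫ x in (0:ℝ)..1,
            a s x * (ρ s x - ξ s x)
              * (ρ s x * |ρ s x| ^ (p - 2) - ξ s x * |ξ s x| ^ (p - 2)))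
        + (1 / p) * ∫ s in (0:ℝ)..t,
            ((1 - |c₁| ^ p) * |ξ s 1| ^ p + (1 - |c₀| ^ p) * |ρ s 0| ^ p)
      = (1 / p) * ∫ x in (0:ℝ)..1, (|ρ 0 x| ^ p + |ξ 0 x| ^ p)) ∧
    AntitoneOn (fun t => ∫ x in (0:ℝ)..1, (|ρ t x| ^ p + |ξ t x| ^ p))
      (Set.Icc (0:ℝ) T) := by
  have hp0 : (0:ℝ) < p := by linarith
  have hρc : Continuous fun q : ℝ × ℝ => ρ q.1 q.2 := hρ.continuous
  have hξc : Continuous fun q : ℝ × ℝ => ξ q.1 q.2 := hξ.continuous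
  have hρd : Differentiable ℝ fun q : ℝ × ℝ => ρ q.1 q.2 := hρ.differentiable one_ne_zero
  have hξd : Differentiable ℝ fun q : ℝ × ℝ => ξ q.1 q.2 := hξ.differentiable one_ne_zero
  have hφc : Continuous (fun u : ℝ => u * |u| ^ (p - 2)) := aux_phi_cont hp
  have habsP : Continuous (fun u : ℝ => |u| ^ p) := by
    have hd : Differentiable ℝ (fun v : ℝ => |v| ^ p) :=
      fun u => (aux_hasDerivAt_abs_rpow hp u).differentiableAt
    exact hd.continuous
  set Pt : ℝ × ℝ → ℝ := fun q => fderiv ℝ (fun q : ℝ × ℝ => ρ q.1 q.2) q (1, 0) with hPtdef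
  set Px : ℝ × ℝ → ℝ := fun q => fderiv ℝ (fun q : ℝ × ℝ => ρ q.1 q.2) q (0, 1) with hPxdef
  set Qt : ℝ × ℝ → ℝ := fun q => fderiv ℝ (fun q : ℝ × ℝ => ξ q.1 q.2) q (1, 0) with hQtdef
  set Qx : ℝ × ℝ → ℝ := fun q => fderiv ℝ (fun q : ℝ × ℝ => ξ q.1 q.2) q (0, 1) with hQxdef
  have hRt : ∀ t x, HasDerivAt (fun s => ρ s x) (Pt (t, x)) t := fun t x => by
    have := (hρd (t, x)).hasFDerivAt.comp_hasDerivAt t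
      ((hasDerivAt_id t).prodMk (hasDerivAt_const t x)); exact this
  have hRx : ∀ t x, HasDerivAt (fun y => ρ t y) (Px (t, x)) x := fun t x =>
    (hρd (t, x)).hasFDerivAt.comp_hasDerivAt x
      ((hasDerivAt_const x t).prodMk (hasDerivAt_id x))
  have hQt : ∀ t x, HasDerivAt (fun s => ξ s x) (Qt (t, x)) t := fun t x => by
    have := (hξd (t, x)).hasFDerivAt.comp_hasDerivAt t
      ((hasDerivAt_id t).prodMk (hasDerivAt_const t x)); exact this
  have hQx : ∀ t x, HasDerivAt (fun y => ξ t y) (Qx (t, x)) x := fun t x =>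
    (hξd (t, x)).hasFDerivAt.comp_hasDerivAt x
      ((hasDerivAt_const x t).prodMk (hasDerivAt_id x))
  have hPtc : Continuous Pt := (hρ.continuous_fderiv one_ne_zero).clm_apply continuous_const
  have hPxc : Continuous Px := (hρ.continuous_fderiv one_ne_zero).clm_apply continuous_const
  have hQtc : Continuous Qt := (hξ.continuous_fderiv one_ne_zero).clm_apply continuous_const
  have hQxc : Continuous Qx := (hξ.continuous_fderiv one_ne_zero).clm_apply continuous_const
  -- PDEs in terms of the partial derivatives
  have hpdeR : ∀ s ∈ Set.Icc (0:ℝ) T, ∀ x ∈ Set.Icc (0:ℝ) 1,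
      Pt (s, x) = Px (s, x) - (1/2) * a s x * (ρ s x - ξ s x) := by
    intro s hs x hx
    have h := hpde1 s hs x hx
    rw [(hRt s x).deriv, (hRx s x).deriv] at h
    linarith
  have hpdeS : ∀ s ∈ Set.Icc (0:ℝ) T, ∀ x ∈ Set.Icc (0:ℝ) 1,
      Qt (s, x) = -Qx (s, x) + (1/2) * a s x * (ρ s x - ξ s x) := by
    intro s hs x hx
    have h := hpde2 s hs x hx
    rw [(hQt s x).deriv, (hQx s x).deriv] at h
    linarith
  -- time derivative of the energy density
  have hG : ∀ s x, HasDerivAt (fun τ => |ρ τ x| ^ p + |ξ τ x| ^ p)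
      (p * (Pt (s, x) * (ρ s x * |ρ s x| ^ (p - 2))
        + Qt (s, x) * (ξ s x * |ξ s x| ^ (p - 2)))) s := by
    intro s x
    have h1 := (aux_hasDerivAt_abs_rpow hp (ρ s x)).comp s (hRt s x)
    have h2 := (aux_hasDerivAt_abs_rpow hp (ξ s x)).comp s (hQt s x)
    refine (h1.add h2).congr_deriv ?_
    ring
  -- continuity of the t-derivative integrand, jointly
  have hgtc : Continuous fun q : ℝ × ℝ => p * (Pt q * (ρ q.1 q.2 * |ρ q.1 q.2| ^ (p - 2))
      + Qt q * (ξ q.1 q.2 * |ξ q.1 q.2| ^ (p - 2))) :=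
    continuous_const.mul ((hPtc.mul (hφc.comp hρc)).add (hQtc.mul (hφc.comp hξc)))
  -- continuity of the dissipation integrand, jointly
  have hdc : Continuous fun q : ℝ × ℝ => a q.1 q.2 * (ρ q.1 q.2 - ξ q.1 q.2)
      * (ρ q.1 q.2 * |ρ q.1 q.2| ^ (p - 2) - ξ q.1 q.2 * |ξ q.1 q.2| ^ (p - 2)) :=
    (ha.mul (hρc.sub hξc)).mul ((hφc.comp hρc).sub (hφc.comp hξc))
  have hDcont : Continuous fun s => ∫ x in (0:ℝ)..1, a s x * (ρ s x - ξ s x)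
      * (ρ s x * |ρ s x| ^ (p - 2) - ξ s x * |ξ s x| ^ (p - 2)) := by
    apply intervalIntegral.continuous_parametric_intervalIntegral_of_continuous'
    exact hdc
  have hBcont : Continuous fun s : ℝ =>
      (1 - |c₁| ^ p) * |ξ s 1| ^ p + (1 - |c₀| ^ p) * |ρ s 0| ^ p := by
    apply Continuous.add
    · exact continuous_const.mul
        (habsP.comp (hξc.comp (continuous_id.prodMk continuous_const)))
    · exact continuous_const.mul
        (habsP.comp (hρc.comp (continuous_id.prodMk continuous_const)))
  -- Step A : FTC in time plus Fubini
  have stepA : ∀ t, 0 ≤ t →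
      (∫ x in (0:ℝ)..1, (|ρ t x| ^ p + |ξ t x| ^ p))
        - (∫ x in (0:ℝ)..1, (|ρ 0 x| ^ p + |ξ 0 x| ^ p))
      = ∫ s in (0:ℝ)..t, ∫ x in (0:ℝ)..1,
          p * (Pt (s, x) * (ρ s x * |ρ s x| ^ (p - 2))
            + Qt (s, x) * (ξ s x * |ξ s x| ^ (p - 2))) := by
    intro t ht
    have hintb : ∀ τ : ℝ, IntervalIntegrable (fun x => |ρ τ x| ^ p + |ξ τ x| ^ p)
        volume 0 1 := by
      intro τ
      exact ((habsP.comp (hρc.comp (continuous_const.prodMk continuous_id))).add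
        (habsP.comp (hξc.comp (continuous_const.prodMk continuous_id)))).intervalIntegrable 0 1
    calc (∫ x in (0:ℝ)..1, (|ρ t x| ^ p + |ξ t x| ^ p))
          - (∫ x in (0:ℝ)..1, (|ρ 0 x| ^ p + |ξ 0 x| ^ p))
        = ∫ x in (0:ℝ)..1, ((|ρ t x| ^ p + |ξ t x| ^ p) - (|ρ 0 x| ^ p + |ξ 0 x| ^ p)) :=
          (intervalIntegral.integral_sub (hintb t) (hintb 0)).symm
      _ = ∫ x in (0:ℝ)..1, ∫ s in (0:ℝ)..t,
            p * (Pt (s, x) * (ρ s x * |ρ s x| ^ (p - 2))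
              + Qt (s, x) * (ξ s x * |ξ s x| ^ (p - 2))) := by
          apply intervalIntegral.integral_congr
          intro x _
          exact (intervalIntegral.integral_eq_sub_of_hasDerivAt (fun s _ => hG s x)
            ((hgtc.comp (continuous_id.prodMk continuous_const)).intervalIntegrable 0 t)).symm
      _ = _ := aux_swap _ hgtc t ht
  -- Step B : pointwise-in-s identity via FTC in x and boundary conditions
  have stepB : ∀ s ∈ Set.Icc (0:ℝ) T,
      (∫ x in (0:ℝ)..1, p * (Pt (s, x) * (ρ s x * |ρ s x| ^ (p - 2))
          + Qt (s, x) * (ξ s x * |ξ s x| ^ (p - 2))))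
      = -((p/2) * ∫ x in (0:ℝ)..1, a s x * (ρ s x - ξ s x)
            * (ρ s x * |ρ s x| ^ (p - 2) - ξ s x * |ξ s x| ^ (p - 2)))
        - ((1 - |c₁| ^ p) * |ξ s 1| ^ p + (1 - |c₀| ^ p) * |ρ s 0| ^ p) := by
    intro s hs
    have hFTCx : (∫ x in (0:ℝ)..1, (p * (Px (s, x) * (ρ s x * |ρ s x| ^ (p - 2))
        - Qx (s, x) * (ξ s x * |ξ s x| ^ (p - 2)))))
        = (|ρ s 1| ^ p - |ξ s 1| ^ p) - (|ρ s 0| ^ p - |ξ s 0| ^ p) := by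
      have hderiv : ∀ x : ℝ, HasDerivAt (fun y => |ρ s y| ^ p - |ξ s y| ^ p)
          (p * (Px (s, x) * (ρ s x * |ρ s x| ^ (p - 2))
            - Qx (s, x) * (ξ s x * |ξ s x| ^ (p - 2)))) x := by
        intro x
        have h1 := (aux_hasDerivAt_abs_rpow hp (ρ s x)).comp x (hRx s x)
        have h2 := (aux_hasDerivAt_abs_rpow hp (ξ s x)).comp x (hQx s x)
        refine (h1.sub h2).congr_deriv ?_
        ring
      have hcont : Continuous fun x => p * (Px (s, x) * (ρ s x * |ρ s x| ^ (p - 2))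
          - Qx (s, x) * (ξ s x * |ξ s x| ^ (p - 2))) := by
        exact continuous_const.mul
          ((((hPxc.mul (hφc.comp hρc)).sub (hQxc.mul (hφc.comp hξc))).comp
            ((continuous_const (y := s)).prodMk continuous_id)))
      exact intervalIntegral.integral_eq_sub_of_hasDerivAt (fun x _ => hderiv x)
        (hcont.intervalIntegrable 0 1)
    have hcongr : ∀ x ∈ Set.uIcc (0:ℝ) 1,
        p * (Pt (s, x) * (ρ s x * |ρ s x| ^ (p - 2))
          + Qt (s, x) * (ξ s x * |ξ s x| ^ (p - 2)))
        = (p * (Px (s, x) * (ρ s x * |ρ s x| ^ (p - 2))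
            - Qx (s, x) * (ξ s x * |ξ s x| ^ (p - 2))))
          - (p/2) * (a s x * (ρ s x - ξ s x)
            * (ρ s x * |ρ s x| ^ (p - 2) - ξ s x * |ξ s x| ^ (p - 2))) := by
      intro x hx
      rw [Set.uIcc_of_le zero_le_one] at hx
      rw [hpdeR s hs x hx, hpdeS s hs x hx]
      ring
    rw [intervalIntegral.integral_congr hcongr]
    rw [intervalIntegral.integral_sub, hFTCx]
    · obtain ⟨hb0, hb1⟩ := hbc s hs
      rw [hb0, hb1, abs_mul, abs_mul,
        Real.mul_rpow (abs_nonneg _) (abs_nonneg _),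
        Real.mul_rpow (abs_nonneg _) (abs_nonneg _),
        intervalIntegral.integral_const_mul]
      ring
    · exact (continuous_const.mul
        (((hPxc.mul (hφc.comp hρc)).sub (hQxc.mul (hφc.comp hξc))).comp
          ((continuous_const (y := s)).prodMk continuous_id))).intervalIntegrable 0 1
    · exact (continuous_const.mul (hdc.comp
        ((continuous_const (y := s)).prodMk continuous_id))).intervalIntegrable 0 1
  -- the key identity
  have key : ∀ t ∈ Set.Icc (0:ℝ) T,
      (∫ x in (0:ℝ)..1, (|ρ t x| ^ p + |ξ t x| ^ p))
        - (∫ x in (0:ℝ)..1, (|ρ 0 x| ^ p + |ξ 0 x| ^ p))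
      = -((p/2) * ∫ s in (0:ℝ)..t, ∫ x in (0:ℝ)..1, a s x * (ρ s x - ξ s x)
            * (ρ s x * |ρ s x| ^ (p - 2) - ξ s x * |ξ s x| ^ (p - 2)))
        - ∫ s in (0:ℝ)..t, ((1 - |c₁| ^ p) * |ξ s 1| ^ p + (1 - |c₀| ^ p) * |ρ s 0| ^ p) := by
    intro t ht
    rw [stepA t ht.1]
    have hcongr : ∀ s₀ ∈ Set.uIcc (0:ℝ) t,
        (∫ x in (0:ℝ)..1, p * (Pt (s₀, x) * (ρ s₀ x * |ρ s₀ x| ^ (p - 2))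
            + Qt (s₀, x) * (ξ s₀ x * |ξ s₀ x| ^ (p - 2))))
        = -((p/2) * ∫ x in (0:ℝ)..1, a s₀ x * (ρ s₀ x - ξ s₀ x)
              * (ρ s₀ x * |ρ s₀ x| ^ (p - 2) - ξ s₀ x * |ξ s₀ x| ^ (p - 2)))
          - ((1 - |c₁| ^ p) * |ξ s₀ 1| ^ p + (1 - |c₀| ^ p) * |ρ s₀ 0| ^ p) := by
      intro s₀ hs₀
      rw [Set.uIcc_of_le ht.1] at hs₀
      exact stepB s₀ ⟨hs₀.1, hs₀.2.trans ht.2⟩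
    rw [intervalIntegral.integral_congr hcongr]
    rw [intervalIntegral.integral_sub, intervalIntegral.integral_neg,
      intervalIntegral.integral_const_mul]
    · exact ((continuous_const.mul hDcont).neg).intervalIntegrable 0 t
    · exact hBcont.intervalIntegrable 0 t
  constructor
  · intro t ht
    have hk := key t ht
    have hpne : p ≠ 0 := ne_of_gt hp0
    field_simp at hk ⊢
    linear_combination hk
  · intro t1 ht1 t2 ht2 h12
    simp only
    have hk1 := key t1 ht1
    have hk2 := key t2 ht2
    -- monotonicity of the two accumulated integrals
    have hDnonneg : ∀ u ∈ Set.Icc (0:ℝ) T, 0 ≤ ∫ x in (0:ℝ)..1, a u x * (ρ u x - ξ u x)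
        * (ρ u x * |ρ u x| ^ (p - 2) - ξ u x * |ξ u x| ^ (p - 2)) := by
      intro u hu
      apply intervalIntegral.integral_nonneg zero_le_one
      intro x hx
      rw [mul_assoc]
      exact mul_nonneg (ha0 u hu x hx) (aux_pair_nonneg hp _ _)
    have hBnonneg : ∀ u : ℝ, 0 ≤ (1 - |c₁| ^ p) * |ξ u 1| ^ p + (1 - |c₀| ^ p) * |ρ u 0| ^ p := by
      intro u
      have h1 : |c₁| ^ p ≤ 1 := Real.rpow_le_one (abs_nonneg _)
        (le_of_lt (abs_lt.mpr ⟨hc₁.1, hc₁.2⟩)) hp0.le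
      have h0 : |c₀| ^ p ≤ 1 := Real.rpow_le_one (abs_nonneg _)
        (le_of_lt (abs_lt.mpr ⟨hc₀.1, hc₀.2⟩)) hp0.le
      have := Real.rpow_nonneg (abs_nonneg (ξ u 1)) p
      have := Real.rpow_nonneg (abs_nonneg (ρ u 0)) p
      nlinarith
    have hDmono : (∫ s in (0:ℝ)..t1, ∫ x in (0:ℝ)..1, a s x * (ρ s x - ξ s x)
          * (ρ s x * |ρ s x| ^ (p - 2) - ξ s x * |ξ s x| ^ (p - 2)))
        ≤ ∫ s in (0:ℝ)..t2, ∫ x in (0:ℝ)..1, a s x * (ρ s x - ξ s x)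
          * (ρ s x * |ρ s x| ^ (p - 2) - ξ s x * |ξ s x| ^ (p - 2)) := by
      have hsub := intervalIntegral.integral_interval_sub_left
        (hDcont.intervalIntegrable (μ := volume) 0 t2)
        (hDcont.intervalIntegrable (μ := volume) 0 t1)
      have hpos : 0 ≤ ∫ s in t1..t2, ∫ x in (0:ℝ)..1, a s x * (ρ s x - ξ s x)
          * (ρ s x * |ρ s x| ^ (p - 2) - ξ s x * |ξ s x| ^ (p - 2)) := by
        apply intervalIntegral.integral_nonneg h12
        intro u hu
        exact hDnonneg u ⟨le_trans ht1.1 hu.1, le_trans hu.2 ht2.2⟩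
      linarith
    have hBmono : (∫ s in (0:ℝ)..t1, ((1 - |c₁| ^ p) * |ξ s 1| ^ p + (1 - |c₀| ^ p) * |ρ s 0| ^ p))
        ≤ ∫ s in (0:ℝ)..t2, ((1 - |c₁| ^ p) * |ξ s 1| ^ p + (1 - |c₀| ^ p) * |ρ s 0| ^ p) := by
      have hsub := intervalIntegral.integral_interval_sub_left
        (hBcont.intervalIntegrable (μ := volume) 0 t2)
        (hBcont.intervalIntegrable (μ := volume) 0 t1)
      have hpos : 0 ≤ ∫ s in t1..t2, ((1 - |c₁| ^ p) * |ξ s 1| ^ p + (1 - |c₀| ^ p) * |ρ s 0| ^ p) :=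
        intervalIntegral.integral_nonneg h12 (fun u _ => hBnonneg u)
      linarith
    nlinarith [hDmono, hBmono, hk1, hk2, hp0]
end
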